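/- If X is a Hausdorff space with a π-base whose elements have compact closures, then |X| ≤ 2^(ψ_c(X)·t(X)·wL(X)). -/

import Mathlib

open Cardinal Set

universe u

section Defs
variable (X : Type u) [TopologicalSpace X]

/-- An open cover of the whole space. -/
def IsOpenCover (𝒰 : Set (Set X)) : Prop := (∀ U ∈ 𝒰, IsOpen U) ∧ ⋃₀ 𝒰 = Set.univ

/-- The cellularity: supremum of cardinalities of pairwise disjoint families of nonempty
open sets, plus `ℵ₀`. -/
noncomputable def cellularity : Cardinal.{u} :=
  max ℵ₀ (⨆ 𝒰 : {𝒰 : Set (Set X) // (∀ U ∈ 𝒰, IsOpen U ∧ U.Nonempty) ∧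
    𝒰.PairwiseDisjoint id}, #𝒰.1)

/-- The weak Lindelöf degree. -/
noncomputable def wLdeg : Cardinal.{u} :=
  sInf {κ | ℵ₀ ≤ κ ∧ ∀ 𝒰 : Set (Set X), IsOpenCover X 𝒰 →
    ∃ 𝒱 ⊆ 𝒰, #𝒱 ≤ κ ∧ Dense (⋃₀ 𝒱)}

/-- The tightness. -/
noncomputable def tightness : Cardinal.{u} :=
  sInf {κ | ℵ₀ ≤ κ ∧ ∀ (A : Set X) (x : X), x ∈ closure A →
    ∃ B ⊆ A, #B ≤ κ ∧ x ∈ closure B}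

/-- The π-character. -/
noncomputable def piCharacter : Cardinal.{u} :=
  sInf {κ | ℵ₀ ≤ κ ∧ ∀ x : X, ∃ 𝒬 : Set (Set X), #𝒬 ≤ κ ∧
    (∀ P ∈ 𝒬, IsOpen P ∧ P.Nonempty) ∧
    ∀ U : Set X, IsOpen U → x ∈ U → ∃ P ∈ 𝒬, P ⊆ U}

/-- The pseudocharacter. -/
noncomputable def pseudoChar : Cardinal.{u} :=
  sInf {κ | ℵ₀ ≤ κ ∧ ∀ x : X, ∃ 𝒱 : Set (Set X), #𝒱 ≤ κ ∧
    (∀ V ∈ 𝒱, IsOpen V ∧ x ∈ V) ∧ ⋂₀ 𝒱 = {x}}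

/-- The closed pseudocharacter. -/
noncomputable def closedPseudoChar : Cardinal.{u} :=
  sInf {κ | ℵ₀ ≤ κ ∧ ∀ x : X, ∃ 𝒱 : Set (Set X), #𝒱 ≤ κ ∧
    (∀ V ∈ 𝒱, IsOpen V ∧ x ∈ V) ∧ (⋂ V ∈ 𝒱, closure V) = {x}}

/-- The density. -/
noncomputable def densityCard : Cardinal.{u} :=
  sInf {κ | ℵ₀ ≤ κ ∧ ∃ D : Set X, #D ≤ κ ∧ Dense D}

/-- The star of a set `A` with respect to a family `𝒰`. -/
def st (A : Set X) (𝒰 : Set (Set X)) : Set X := ⋃₀ {U | U ∈ 𝒰 ∧ (A ∩ U).Nonempty}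

/-- The θ-closure of a set. -/
def thetaClosure (A : Set X) : Set X :=
  {x | ∀ U : Set X, IsOpen U → x ∈ U → (closure U ∩ A).Nonempty}

/-- The θ-density. -/
noncomputable def thetaDensityCard : Cardinal.{u} :=
  sInf {κ | ℵ₀ ≤ κ ∧ ∃ D : Set X, #D ≤ κ ∧ thetaClosure X D = Set.univ}

/-- A discrete family of sets: each point has a neighborhood meeting at most one member. -/
def IsDiscreteFamily (𝒰 : Set (Set X)) : Prop :=
  ∀ x : X, ∃ V : Set X, IsOpen V ∧ x ∈ V ∧ {U | U ∈ 𝒰 ∧ (V ∩ U).Nonempty}.Subsingleton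

/-- Countable discrete cellularity. -/
def CDC : Prop :=
  ∀ 𝒰 : Set (Set X), (∀ U ∈ 𝒰, IsOpen U ∧ U.Nonempty) → IsDiscreteFamily X 𝒰 → 𝒰.Countable

/-- Star-cdc: every open cover has a cdc subspace whose star covers the space. -/
def StarCDC : Prop :=
  ∀ 𝒰 : Set (Set X), IsOpenCover X 𝒰 → ∃ Y : Set X, CDC ↥Y ∧ st X Y 𝒰 = Set.univ

/-- H-closed space: every open cover has a finite subfamily with dense union. -/
def IsHClosedSpace : Prop :=
  ∀ 𝒰 : Set (Set X), IsOpenCover X 𝒰 → ∃ 𝒱 ⊆ 𝒰, 𝒱.Finite ∧ Dense (⋃₀ 𝒱)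

/-- Countable cellularity (ccc). -/
def CCCSpace : Prop :=
  ∀ 𝒰 : Set (Set X), (∀ U ∈ 𝒰, IsOpen U ∧ U.Nonempty) → 𝒰.PairwiseDisjoint id → 𝒰.Countable

/-- Weakly Lindelöf space. -/
def WeaklyLindelof : Prop :=
  ∀ 𝒰 : Set (Set X), IsOpenCover X 𝒰 → ∃ 𝒱 ⊆ 𝒰, 𝒱.Countable ∧ Dense (⋃₀ 𝒱)

/-- Almost Lindelöf space. -/
def AlmostLindelof : Prop :=
  ∀ 𝒰 : Set (Set X), IsOpenCover X 𝒰 → ∃ 𝒱 ⊆ 𝒰, 𝒱.Countable ∧ (⋃ V ∈ 𝒱, closure V) = Set.univ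

/-- A π-base: a family of nonempty open sets such that every nonempty open set contains one. -/
def IsPiBase (ℬ : Set (Set X)) : Prop :=
  (∀ B ∈ ℬ, IsOpen B ∧ B.Nonempty) ∧
  ∀ U : Set X, IsOpen U → U.Nonempty → ∃ B ∈ ℬ, B ⊆ U

/-- Power homogeneous: some power of `X` is homogeneous. -/
def PowerHomogeneous : Prop :=
  ∃ ι : Type u, ∀ x y : ι → X, ∃ h : (ι → X) ≃ₜ (ι → X), h x = y

/-- A strong `G_δ`-diagonal of rank 2. -/
def HasStrongRank2Diagonal : Prop :=
  ∃ 𝒰 : ℕ → Set (Set X), (∀ n, IsOpenCover X (𝒰 n)) ∧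
    ∀ x : X, (⋂ n, closure (st X (st X {x} (𝒰 n)) (𝒰 n))) = {x}

/-- A `G_δ`-diagonal of rank 2. -/
def HasRank2Diagonal : Prop :=
  ∃ 𝒰 : ℕ → Set (Set X), (∀ n, IsOpenCover X (𝒰 n)) ∧
    ∀ x : X, (⋂ n, st X (st X {x} (𝒰 n)) (𝒰 n)) = {x}

/-- A `G_δ`-diagonal of rank 3. -/
def HasRank3Diagonal : Prop :=
  ∃ 𝒰 : ℕ → Set (Set X), (∀ n, IsOpenCover X (𝒰 n)) ∧
    ∀ x : X, (⋂ n, st X (st X (st X {x} (𝒰 n)) (𝒰 n)) (𝒰 n)) = {x}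

/-- Basically disconnected: the closure of every cozero set is open. -/
def BasicallyDisconnected : Prop :=
  ∀ f : C(X, ℝ), IsOpen (closure {x | f x ≠ 0})

end Defs

namespace Stmt17Aux

lemma mk_finite_subsets_le {α : Type u} (s : Set α) :
    #{t : Set α // t ⊆ s ∧ t.Finite} ≤ max #s ℵ₀ := by
  classical
  have h1 : #{t : Set α // t ⊆ s ∧ t.Finite} ≤ #(Finset s) := by
    refine mk_le_of_injective (f := fun t =>
      (t.2.2.preimage (Set.injOn_of_injective Subtype.val_injective)).toFinset) ?_
    rintro ⟨t1, ht1s, ht1⟩ ⟨t2, ht2s, ht2⟩ h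
    simp only [Set.Finite.toFinset_inj] at h
    have := congrArg (fun (u : Set s) => (Subtype.val : s → α) '' u) h
    simp only [Subtype.image_preimage_coe] at this
    rw [inter_eq_right.mpr ht1s, inter_eq_right.mpr ht2s] at this
    exact Subtype.ext this
  refine h1.trans ?_
  rcases finite_or_infinite (↥s) with hf | hinf
  · haveI := Fintype.ofFinite (↥s)
    exact le_trans (lt_aleph0_of_finite _).le (le_max_right _ _)
  · rw [mk_finset_of_infinite]
    exact le_max_left _ _

lemma mk_small_subsets_le {α : Type u} {s : Set α} {κ : Cardinal.{u}} (hκ : ℵ₀ ≤ κ)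
    (hs : #s ≤ 2 ^ κ) : #{t : Set α // t ⊆ s ∧ #t ≤ κ} ≤ 2 ^ κ := by
  have h2 : (ℵ₀ : Cardinal) ≤ 2 ^ κ := hκ.trans (cantor κ).le
  calc #{t : Set α // t ⊆ s ∧ #t ≤ κ} ≤ max #s ℵ₀ ^ κ := mk_bounded_subset_le s κ
    _ ≤ (2 ^ κ) ^ κ := power_le_power_right (max_le hs h2)
    _ = 2 ^ (κ * κ) := (power_mul).symm
    _ = 2 ^ κ := by rw [mul_eq_self hκ]

lemma mk_closure_le {X : Type u} [TopologicalSpace X] {κ : Cardinal.{u}} (hκ : ℵ₀ ≤ κ)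
    (ht : ∀ (A : Set X) (x : X), x ∈ closure A → ∃ B ⊆ A, #B ≤ κ ∧ x ∈ closure B)
    (hψ : ∀ x : X, ∃ 𝒱 : Set (Set X), #𝒱 ≤ κ ∧ (∀ V ∈ 𝒱, IsOpen V ∧ x ∈ V) ∧
      (⋂ V ∈ 𝒱, closure V) = {x})
    {M : Set X} (hM : #M ≤ 2 ^ κ) : #(closure M) ≤ 2 ^ κ := by
  classical
  have key : ∀ y : closure M, ∃ 𝒞 : Set (Set X),
      (𝒞 ⊆ {C | C ⊆ M ∧ #C ≤ κ} ∧ #𝒞 ≤ κ) ∧ (⋂ C ∈ 𝒞, closure C) = {y.1} := by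
    rintro ⟨y, hy⟩
    obtain ⟨𝒱, hcard, hopen, hint⟩ := hψ y
    have hyV : ∀ V : 𝒱, y ∈ closure (V.1 ∩ M) := by
      rintro ⟨V, hV⟩
      rw [mem_closure_iff]
      intro o ho hyo
      have h1 : (o ∩ V).Nonempty → True := fun _ => trivial
      have h2 := (mem_closure_iff.mp hy) (o ∩ V) (ho.inter (hopen V hV).1)
        ⟨hyo, (hopen V hV).2⟩
      obtain ⟨z, ⟨hzo, hzV⟩, hzM⟩ := h2
      exact ⟨z, hzo, hzV, hzM⟩
    have hex : ∀ V : 𝒱, ∃ C, C ⊆ V.1 ∩ M ∧ #C ≤ κ ∧ y ∈ closure C := by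
      intro V
      obtain ⟨C, hC1, hC2, hC3⟩ := ht (V.1 ∩ M) y (hyV V)
      exact ⟨C, hC1, hC2, hC3⟩
    choose f hf1 hf2 hf3 using hex
    refine ⟨Set.range f, ⟨?_, mk_range_le.trans hcard⟩, ?_⟩
    · rintro _ ⟨V, rfl⟩
      exact ⟨(hf1 V).trans inter_subset_right, hf2 V⟩
    · apply subset_antisymm
      · intro z hz
        rw [← hint]
        refine mem_iInter₂.mpr fun V hV => ?_
        have := (mem_iInter₂.mp hz) (f ⟨V, hV⟩) (mem_range_self _)
        exact closure_mono ((hf1 ⟨V, hV⟩).trans inter_subset_left) this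
      · intro z hz
        rcases hz with rfl
        exact mem_iInter₂.mpr (by rintro _ ⟨V, rfl⟩; exact hf3 V)
  choose Φ hΦ1 hΦ2 using key
  have hinj : Function.Injective (fun y : closure M =>
      (⟨Φ y, (hΦ1 y).1, (hΦ1 y).2⟩ : {𝒞 : Set (Set X) // 𝒞 ⊆ {C | C ⊆ M ∧ #C ≤ κ} ∧ #𝒞 ≤ κ})) := by
    intro a b h
    have h' : Φ a = Φ b := congrArg Subtype.val h
    have : ({a.1} : Set X) = {b.1} := by rw [← hΦ2 a, ← hΦ2 b, h']
    exact Subtype.ext (singleton_eq_singleton_iff.mp this)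
  have hMsmall : #{C : Set X | C ⊆ M ∧ #C ≤ κ} ≤ 2 ^ κ := mk_small_subsets_le hκ hM
  calc #(closure M) ≤ #{𝒞 : Set (Set X) // 𝒞 ⊆ {C | C ⊆ M ∧ #C ≤ κ} ∧ #𝒞 ≤ κ} :=
        mk_le_of_injective hinj
    _ ≤ 2 ^ κ := mk_small_subsets_le hκ hMsmall

noncomputable def ordFix {γ : Type u} (step : Set γ → Set γ) : Ordinal.{u} → Set γ :=
  WellFounded.fix Ordinal.lt_wf (fun α ih => step (⋃ β : Iio α, ih β.1 β.2))

lemma ordFix_eq {γ : Type u} (step : Set γ → Set γ) (α : Ordinal.{u}) :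
    ordFix step α = step (⋃ β : Iio α, ordFix step β.1) :=
  WellFounded.fix_eq _ _ _

lemma ordFix_mono {γ : Type u} {step : Set γ → Set γ} (hstep : ∀ A, A ⊆ step A)
    {β α : Ordinal.{u}} (h : β ≤ α) : ordFix step β ⊆ ordFix step α := by
  rcases eq_or_lt_of_le h with rfl | h
  · exact subset_rfl
  · rw [ordFix_eq step α]
    exact (subset_iUnion (fun b : Iio α => ordFix step b.1) ⟨β, h⟩).trans (hstep _)

lemma mk_iUnion_Iio_le {γ : Type u} (F : Ordinal.{u} → Set γ) {ν : Ordinal.{u}} {c : Cardinal.{u}}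
    (hν : ν.card ≤ c) (hF : ∀ β < ν, #(F β) ≤ c) (hc : ℵ₀ ≤ c) :
    #(⋃ β : Iio ν, F β.1) ≤ c := by
  have h := mk_iUnion_le_lift (ι := Iio ν) (fun β => F β.1)
  rw [Ordinal.mk_Iio_ordinal] at h
  have h2 : (⨆ β : Iio ν, lift.{u+1} #(F β.1)) ≤ lift.{u+1} c :=
    ciSup_le' fun β => lift_le.mpr (hF β.1 β.2)
  have h3 : lift.{u} (lift.{u+1} ν.card) ≤ lift.{u+1} c := by
    rw [lift_lift]
    exact lift_le.mpr hν
  have h1 : lift.{u+1} #(⋃ β : Iio ν, F β.1) ≤ lift.{u+1} c := by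
    refine h.trans ?_
    calc _ ≤ lift.{u+1} c * lift.{u+1} c := mul_le_mul' h3 h2
      _ = lift.{u+1} (c * c) := (lift_mul _ _).symm
      _ = lift.{u+1} c := by rw [mul_eq_self hc]
  exact lift_le.mp h1

lemma compact_card {Y : Type u} [TopologicalSpace Y] [CompactSpace Y] [T2Space Y]
    {κ : Cardinal.{u}} (hκ : ℵ₀ ≤ κ)
    (hψ0 : ∀ y : Y, ∃ 𝒱 : Set (Set Y), #𝒱 ≤ κ ∧ (∀ V ∈ 𝒱, IsOpen V ∧ y ∈ V) ∧ ⋂₀ 𝒱 = {y}) :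
    #Y ≤ 2 ^ κ := by
  classical
  have h2κ : (ℵ₀ : Cardinal) ≤ 2 ^ κ := hκ.trans (cantor κ).le
  rcases isEmpty_or_nonempty Y with hY | hY
  · rw [mk_eq_zero]; exact zero_le
  choose 𝒱 h𝒱c h𝒱o h𝒱i using hψ0
  -- regular shrinking
  have hreg : ∀ (y : Y) (V : Set Y), IsOpen V → y ∈ V →
      ∃ W : Set Y, IsOpen W ∧ y ∈ W ∧ closure W ⊆ V := by
    intro y V hV hyV
    obtain ⟨t, htm, htc, hts⟩ := exists_mem_nhds_isClosed_subset (hV.mem_nhds hyV)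
    exact ⟨interior t, isOpen_interior, mem_interior_iff_mem_nhds.mpr htm,
      (closure_minimal interior_subset htc).trans hts⟩
  have hex : ∀ (y : Y) (V : ↥(𝒱 y)), ∃ W : Set Y, IsOpen W ∧ y ∈ W ∧ closure W ⊆ V.1 :=
    fun y V => hreg y V.1 (h𝒱o y V.1 V.2).1 (h𝒱o y V.1 V.2).2
  choose W hWo hWy hWc using hex
  -- the neighborhood bases
  set N : Y → Set (Set Y) := fun y =>
    insert Set.univ {T | ∃ s : Set (Set Y), s ⊆ Set.range (W y) ∧ s.Finite ∧ s.Nonempty ∧ T = ⋂₀ s}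
    with hN
  have hNmem : ∀ y, ∀ T ∈ N y, IsOpen T ∧ y ∈ T := by
    intro y T hT
    rcases Set.mem_insert_iff.mp hT with rfl | ⟨s, hs1, hs2, hs3, rfl⟩
    · exact ⟨isOpen_univ, mem_univ y⟩
    · constructor
      · exact hs2.isOpen_sInter (fun t ht => by obtain ⟨V, rfl⟩ := hs1 ht; exact hWo y V)
      · exact mem_sInter.mpr fun t ht => by obtain ⟨V, rfl⟩ := hs1 ht; exact hWy y V
  have hNcard : ∀ y, #(N y) ≤ κ := by
    intro y
    show #(insert Set.univ {T | ∃ s : Set (Set Y), s ⊆ Set.range (W y) ∧ s.Finite ∧ s.Nonempty ∧ T = ⋂₀ s} : Set (Set Y)) ≤ κ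
    refine (mk_insert_le).trans ?_
    have h1 : {T | ∃ s : Set (Set Y), s ⊆ Set.range (W y) ∧ s.Finite ∧ s.Nonempty ∧ T = ⋂₀ s} ⊆
        (fun s : Set (Set Y) => ⋂₀ s) '' {s | s ⊆ Set.range (W y) ∧ s.Finite} := by
      rintro T ⟨s, hs1, hs2, _, rfl⟩
      exact ⟨s, ⟨hs1, hs2⟩, rfl⟩
    have h2 : #{T | ∃ s : Set (Set Y), s ⊆ Set.range (W y) ∧ s.Finite ∧ s.Nonempty ∧ T = ⋂₀ s}
        ≤ κ := by
      refine (mk_le_mk_of_subset h1).trans (mk_image_le.trans ?_)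
      refine (mk_finite_subsets_le _).trans (max_le ?_ hκ)
      exact (mk_range_le).trans (h𝒱c y)
    calc _ ≤ κ + 1 := add_le_add_left h2 1
      _ = κ := by
        exact Cardinal.add_one_eq hκ
  have hNbase : ∀ y U, IsOpen U → y ∈ U → ∃ T ∈ N y, T ⊆ U := by
    intro y U hU hyU
    have hcpt : IsCompact Uᶜ := hU.isClosed_compl.isCompact
    have hint : Uᶜ ∩ ⋂ V : ↥(𝒱 y), closure (W y V) = ∅ := by
      rw [eq_empty_iff_forall_notMem]
      rintro z ⟨hz1, hz2⟩
      have : z ∈ ⋂₀ 𝒱 y := by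
        rw [mem_sInter]
        intro V hV
        exact hWc y ⟨V, hV⟩ (mem_iInter.mp hz2 ⟨V, hV⟩)
      rw [h𝒱i y] at this
      rw [mem_singleton_iff] at this
      exact hz1 (this ▸ hyU)
    obtain ⟨u, hu⟩ := hcpt.elim_finite_subfamily_closed _ (fun V => isClosed_closure) hint
    rcases u.eq_empty_or_nonempty with rfl | hune
    · simp only [Finset.notMem_empty, iInter_of_empty, iInter_univ, inter_univ] at hu
      refine ⟨Set.univ, Set.mem_insert _ _, ?_⟩
      rw [eq_empty_iff_forall_notMem] at hu
      intro z _
      by_contra hz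
      exact hu z hz
    · set s : Set (Set Y) := (fun V : ↥(𝒱 y) => W y V) '' ↑u with hs
      refine ⟨⋂₀ s, Set.mem_insert_iff.mpr (Or.inr ⟨s, ?_, u.finite_toSet.image _,
        hune.to_set.image _, rfl⟩), ?_⟩
      · rintro _ ⟨V, _, rfl⟩; exact mem_range_self _
      · intro z hz
        by_contra hzU
        have : z ∈ Uᶜ ∩ ⋂ V ∈ u, closure (W y V) := by
          refine ⟨hzU, mem_iInter₂.mpr fun V hV => ?_⟩
          exact subset_closure (mem_sInter.mp hz _ ⟨V, hV, rfl⟩)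
        rw [hu] at this
        exact this
  -- tightness
  have ht : ∀ (A : Set Y) (x : Y), x ∈ closure A → ∃ B ⊆ A, #B ≤ κ ∧ x ∈ closure B := by
    intro A x hx
    have hpt : ∀ T : ↥(N x), ∃ a, a ∈ T.1 ∩ A := by
      rintro ⟨T, hT⟩
      exact mem_closure_iff.mp hx T (hNmem x T hT).1 (hNmem x T hT).2
    choose p hp using hpt
    refine ⟨Set.range p, ?_, mk_range_le.trans (hNcard x), ?_⟩
    · rintro _ ⟨T, rfl⟩; exact (hp T).2
    · rw [mem_closure_iff]
      intro o ho hxo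
      obtain ⟨T, hTN, hTo⟩ := hNbase x o ho hxo
      exact ⟨p ⟨T, hTN⟩, hTo (hp ⟨T, hTN⟩).1, mem_range_self _⟩
  -- closed pseudocharacter families
  have hψ : ∀ x : Y, ∃ 𝒲 : Set (Set Y), #𝒲 ≤ κ ∧ (∀ V ∈ 𝒲, IsOpen V ∧ x ∈ V) ∧
      (⋂ V ∈ 𝒲, closure V) = {x} := by
    intro x
    refine ⟨Set.range (W x), mk_range_le.trans (h𝒱c x), ?_, ?_⟩
    · rintro _ ⟨V, rfl⟩; exact ⟨hWo x V, hWy x V⟩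
    · apply subset_antisymm
      · intro z hz
        have : z ∈ ⋂₀ 𝒱 x := by
          rw [mem_sInter]
          intro V hV
          exact hWc x ⟨V, hV⟩ (mem_iInter₂.mp hz (W x ⟨V, hV⟩) (mem_range_self _))
        rwa [h𝒱i x] at this
      · rw [singleton_subset_iff]
        exact mem_iInter₂.mpr (by rintro _ ⟨V, rfl⟩; exact subset_closure (hWy x V))
  -- witness function
  have hwit : ∀ 𝒰 : Set (Set Y), ∃ q : Y, (∃ z, z ∉ ⋃₀ 𝒰) → q ∉ ⋃₀ 𝒰 := by
    intro 𝒰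
    by_cases h : ∃ z, z ∉ ⋃₀ 𝒰
    · obtain ⟨z, hz⟩ := h
      exact ⟨z, fun _ => hz⟩
    · exact ⟨Classical.arbitrary Y, fun h' => absurd h' h⟩
  choose g hg using hwit
  -- the closing-off
  set step : Set Y → Set Y := fun A =>
    closure (A ∪ g '' {𝒰 : Set (Set Y) | 𝒰 ⊆ (⋃ y ∈ A, N y) ∧ #𝒰 ≤ κ}) with hstepdef
  have hstep : ∀ A, A ⊆ step A := fun A =>
    (subset_union_left).trans subset_closure
  set H := ordFix step with hH
  set ν := (Order.succ κ).ord with hν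
  have hν_card : ν.card = Order.succ κ := Cardinal.card_ord _
  have hνreg : ν.cof = Order.succ κ := (Cardinal.isRegular_succ hκ).cof_eq
  have hsucc_le : Order.succ κ ≤ 2 ^ κ := Order.succ_le_of_lt (cantor κ)
  have hνlim : Order.IsSuccLimit ν := Cardinal.isSuccLimit_ord (hκ.trans (Order.le_succ κ))
  have hHcard : ∀ α, α < ν → #(H α) ≤ 2 ^ κ := by
    intro α
    induction α using Ordinal.induction with
    | h α IH =>
      intro hα
      have hA : #(⋃ β : Iio α, H β.1) ≤ 2 ^ κ := by
        refine mk_iUnion_Iio_le _ ?_ (fun β hβ => IH β hβ (hβ.trans hα)) h2κ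
        exact (le_of_lt (Cardinal.lt_ord.mp hα)).trans hsucc_le
      rw [hH, ordFix_eq]
      set A := ⋃ β : Iio α, H β.1
      have hpool : #(⋃ y ∈ A, N y) ≤ 2 ^ κ := by
        refine (mk_biUnion_le _ _).trans ?_
        refine le_trans (mul_le_mul' hA (ciSup_le' fun y => (hNcard y.1).trans (κ.cantor).le)) ?_
        rw [mul_eq_self h2κ]
      have himg : #(g '' {𝒰 : Set (Set Y) | 𝒰 ⊆ (⋃ y ∈ A, N y) ∧ #𝒰 ≤ κ}) ≤ 2 ^ κ :=
        mk_image_le.trans (mk_small_subsets_le hκ hpool)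
      refine (mk_closure_le hκ ht hψ ?_)
      refine (mk_union_le _ _).trans ?_
      calc #A + _ ≤ 2 ^ κ + 2 ^ κ := add_le_add hA himg
        _ = 2 ^ κ := add_eq_self h2κ
  have hHmono : ∀ {β α : Ordinal.{u}}, β ≤ α → H β ⊆ H α := fun h => ordFix_mono hstep h
  have hHclosed : ∀ α, IsClosed (H α) := by
    intro α
    rw [hH, ordFix_eq]
    exact isClosed_closure
  set Hs := ⋃ β : Iio ν, H β.1 with hHs
  have hHscard : #Hs ≤ 2 ^ κ :=
    mk_iUnion_Iio_le _ (by rw [hν_card]; exact hsucc_le) (fun β hβ => hHcard β hβ) h2κ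
  -- Hs closed
  have hHsmem : ∀ x ∈ Hs, ∃ β : Ordinal.{u}, β < ν ∧ x ∈ H β := by
    intro x hx
    obtain ⟨β, hβ⟩ := mem_iUnion.mp hx
    exact ⟨β.1, β.2, hβ⟩
  have hHsclosed : IsClosed Hs := by
    rw [← closure_subset_iff_isClosed]
    intro x hx
    obtain ⟨C, hC1, hC2, hC3⟩ := ht Hs x hx
    have hexo : ∀ c : ↥C, ∃ β : Ordinal.{u}, β < ν ∧ c.1 ∈ H β :=
      fun c => hHsmem c.1 (hC1 c.2)
    choose e he1 he2 using hexo
    have hσ : (⨆ c : ↥C, e c) < ν := by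
      refine Ordinal.iSup_lt_ord ?_ he1
      rw [hνreg]
      exact hC2.trans_lt (Order.lt_succ κ)
    have hCσ : C ⊆ H (⨆ c : ↥C, e c) := by
      intro c hc
      exact hHmono (Ordinal.le_iSup e ⟨c, hc⟩) (he2 ⟨c, hc⟩)
    have : x ∈ H (⨆ c : ↥C, e c) :=
      (closure_subset_iff_isClosed.mpr (hHclosed _)) ((closure_mono hCσ) hC3)
    exact mem_iUnion.mpr ⟨⟨_, hσ⟩, this⟩
  -- Hs = univ
  have hHuniv : Hs = Set.univ := by
    by_contra hne
    obtain ⟨q, hq⟩ := (ne_univ_iff_exists_notMem _).mp hne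
    have hexT : ∀ y : ↥Hs, ∃ T, T ∈ N y.1 ∧ T ⊆ {q}ᶜ := by
      rintro ⟨y, hy⟩
      have hyq : y ≠ q := fun h => hq (h ▸ hy)
      obtain ⟨U, V, hU, hV, hyU, hqV, hUV⟩ := t2_separation hyq
      obtain ⟨T, hTN, hTU⟩ := hNbase y U hU hyU
      refine ⟨T, hTN, hTU.trans ?_⟩
      intro z hz
      simp only [mem_compl_iff, mem_singleton_iff]
      rintro rfl
      exact (Set.disjoint_iff.mp hUV) ⟨hz, hqV⟩
    choose T hTN hTq using hexT
    have hcover : Hs ⊆ ⋃ y : ↥Hs, T y := fun x hx =>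
      mem_iUnion.mpr ⟨⟨x, hx⟩, (hNmem x _ (hTN ⟨x, hx⟩)).2⟩
    obtain ⟨u, hu⟩ := (hHsclosed.isCompact).elim_finite_subcover T
      (fun y => (hNmem y.1 _ (hTN y)).1) hcover
    -- choose stages
    choose e he1 he2 using fun y : ↥Hs => hHsmem y.1 y.2
    have hfin : #(↑u : Set ↥Hs) < ℵ₀ := finset_card_lt_aleph0 u
    set σ := ⨆ y : ↥(↑u : Set ↥Hs), e y.1 with hσdef
    have hσ : σ < ν := by
      refine Ordinal.iSup_lt_ord ?_ (fun y => he1 y.1)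
      rw [hνreg]
      exact hfin.trans_le (hκ.trans (Order.le_succ κ))
    have hσ1 : Order.succ σ < ν := hνlim.succ_lt hσ
    set 𝒰 := T '' ↑u with h𝒰
    have h𝒰sub : 𝒰 ⊆ ⋃ y ∈ (⋃ β : Iio (Order.succ σ), H β.1), N y := by
      rintro _ ⟨y, hyu, rfl⟩
      refine mem_biUnion ?_ (hTN y)
      refine mem_iUnion.mpr ⟨⟨σ, Order.lt_succ σ⟩, ?_⟩
      exact hHmono (Ordinal.le_iSup (fun y : ↥(↑u : Set ↥Hs) => e y.1) ⟨y, hyu⟩) (he2 y)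
    have h𝒰card : #𝒰 ≤ κ := mk_image_le.trans ((finset_card_lt_aleph0 u).le.trans hκ)
    have hgmem : g 𝒰 ∈ H (Order.succ σ) := by
      rw [hH, ordFix_eq]
      exact subset_closure (mem_union_right _ ⟨𝒰, ⟨h𝒰sub, h𝒰card⟩, rfl⟩)
    have hgHs : g 𝒰 ∈ Hs := mem_iUnion.mpr ⟨⟨_, hσ1⟩, hgmem⟩
    have hgnot : g 𝒰 ∉ ⋃₀ 𝒰 := by
      refine hg 𝒰 ⟨q, ?_⟩
      rintro ⟨S, ⟨y, _, rfl⟩, hqS⟩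
      exact hTq y hqS rfl
    refine hgnot ?_
    obtain ⟨y, hyu, hgy⟩ := mem_iUnion₂.mp (hu hgHs)
    exact ⟨T y, ⟨y, hyu, rfl⟩, hgy⟩
  calc #Y = #Hs := by rw [hHuniv, mk_univ]
    _ ≤ 2 ^ κ := hHscard

lemma compact_closure_card {X : Type u} [TopologicalSpace X] [T2Space X] {κ : Cardinal.{u}}
    (hκ : ℵ₀ ≤ κ)
    (hψ : ∀ x : X, ∃ 𝒱 : Set (Set X), #𝒱 ≤ κ ∧ (∀ V ∈ 𝒱, IsOpen V ∧ x ∈ V) ∧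
      (⋂ V ∈ 𝒱, closure V) = {x})
    {K : Set X} (hK : IsCompact K) : #K ≤ 2 ^ κ := by
  haveI : CompactSpace K := isCompact_iff_compactSpace.mp hK
  apply compact_card hκ
  rintro ⟨y, hy⟩
  obtain ⟨𝒱, hc, ho, hi⟩ := hψ y
  refine ⟨(fun V => (Subtype.val : K → X) ⁻¹' V) '' 𝒱, mk_image_le.trans hc, ?_, ?_⟩
  · rintro _ ⟨V, hV, rfl⟩
    exact ⟨(ho V hV).1.preimage continuous_subtype_val, (ho V hV).2⟩
  · apply subset_antisymm
    · rintro z hz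
      have hz' : z.1 ∈ ⋂ V ∈ 𝒱, closure V := by
        refine mem_iInter₂.mpr fun V hV => ?_
        have : z ∈ (Subtype.val : K → X) ⁻¹' V := hz _ ⟨V, hV, rfl⟩
        exact subset_closure this
      rw [hi] at hz'
      exact Subtype.ext hz'
    · rw [singleton_subset_iff]
      rintro _ ⟨V, hV, rfl⟩
      exact (ho V hV).2
lemma pibase_shrink {X : Type u} [TopologicalSpace X] [T2Space X] {ℬ : Set (Set X)}
    (hB : IsPiBase X ℬ) (hc : ∀ B ∈ ℬ, IsCompact (closure B)) {U : Set X}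
    (hU : IsOpen U) (hne : U.Nonempty) : ∃ B ∈ ℬ, closure B ⊆ U := by
  obtain ⟨B₂, hB₂, hB₂U⟩ := hB.2 U hU hne
  obtain ⟨q, hq⟩ := (hB.1 B₂ hB₂).2
  set K := closure B₂ with hK
  haveI : CompactSpace K := isCompact_iff_compactSpace.mp (hc B₂ hB₂)
  have hqK : q ∈ K := subset_closure hq
  have hbo : IsOpen ((Subtype.val : K → X) ⁻¹' B₂) :=
    (hB.1 B₂ hB₂).1.preimage continuous_subtype_val
  have hbq : (⟨q, hqK⟩ : K) ∈ (Subtype.val : K → X) ⁻¹' B₂ := hq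
  obtain ⟨t, htm, htc, hts⟩ := exists_mem_nhds_isClosed_subset (hbo.mem_nhds hbq)
  obtain ⟨O, hOt, hOo, hqO⟩ := mem_nhds_iff.mp htm
  obtain ⟨O', hO', hOeq⟩ := isOpen_induced_iff.mp hOo
  have htcompact : IsCompact ((Subtype.val : K → X) '' t) :=
    (htc.isCompact).image continuous_subtype_val
  have htclosed : IsClosed ((Subtype.val : K → X) '' t) := htcompact.isClosed
  set S := O' ∩ B₂ with hS
  have hSo : IsOpen S := hO'.inter (hB.1 B₂ hB₂).1
  have hSne : S.Nonempty := by
    refine ⟨q, ?_, hq⟩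
    have : (⟨q, hqK⟩ : K) ∈ O := hqO
    rw [← hOeq] at this
    exact this
  have hSsub : S ⊆ (Subtype.val : K → X) '' t := by
    rintro x ⟨hxO', hxB₂⟩
    have hxK : x ∈ K := subset_closure hxB₂
    refine ⟨⟨x, hxK⟩, ?_, rfl⟩
    apply hOt
    rw [← hOeq]
    exact hxO'
  obtain ⟨B₁, hB₁, hB₁S⟩ := hB.2 S hSo hSne
  refine ⟨B₁, hB₁, ?_⟩
  calc closure B₁ ⊆ closure S := closure_mono hB₁S
    _ ⊆ (Subtype.val : K → X) '' t := closure_minimal hSsub htclosed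
    _ ⊆ B₂ := by rintro _ ⟨z, hz, rfl⟩; exact hts hz
    _ ⊆ U := hB₂U

lemma main_aux {X : Type u} [TopologicalSpace X] [T2Space X] {κ : Cardinal.{u}} (hκ : ℵ₀ ≤ κ)
    (ht : ∀ (A : Set X) (x : X), x ∈ closure A → ∃ B ⊆ A, #B ≤ κ ∧ x ∈ closure B)
    (hψ0 : ∀ x : X, ∃ 𝒱 : Set (Set X), #𝒱 ≤ κ ∧ (∀ V ∈ 𝒱, IsOpen V ∧ x ∈ V) ∧
      (⋂ V ∈ 𝒱, closure V) = {x})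
    (hw : ∀ 𝒰 : Set (Set X), IsOpenCover X 𝒰 → ∃ 𝒱 ⊆ 𝒰, #𝒱 ≤ κ ∧ Dense (⋃₀ 𝒱))
    {ℬ : Set (Set X)} (hB : IsPiBase X ℬ) (hc : ∀ B ∈ ℬ, IsCompact (closure B)) :
    #X ≤ 2 ^ κ := by
  classical
  have h2κ : (ℵ₀ : Cardinal) ≤ 2 ^ κ := hκ.trans (cantor κ).le
  rcases isEmpty_or_nonempty X with hX | hX
  · rw [mk_eq_zero]; exact zero_le
  obtain ⟨B₀, hB₀, -⟩ := hB.2 Set.univ isOpen_univ univ_nonempty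
  choose 𝒱₀ h𝒱₀c h𝒱₀o h𝒱₀i using hψ0
  set V : X → Set (Set X) := fun x => insert Set.univ (𝒱₀ x) with hVdef
  have hVo : ∀ x : X, ∀ W ∈ V x, IsOpen W ∧ x ∈ W := by
    intro x W hW
    rcases Set.mem_insert_iff.mp hW with rfl | hW
    · exact ⟨isOpen_univ, mem_univ x⟩
    · exact h𝒱₀o x W hW
  have hVc : ∀ x, #(V x) ≤ κ :=
    fun x => (mk_insert_le).trans ((add_le_add_left (h𝒱₀c x) 1).trans
      (le_of_eq (Cardinal.add_one_eq hκ)))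
  have hVi : ∀ x : X, (⋂ W ∈ V x, closure W) = {x} := by
    intro x
    rw [hVdef]
    rw [Set.biInter_insert, closure_univ, Set.univ_inter]
    exact h𝒱₀i x
  have hVuniv : ∀ x, Set.univ ∈ V x := fun x => Set.mem_insert _ _
  have hψ : ∀ x : X, ∃ 𝒱 : Set (Set X), #𝒱 ≤ κ ∧ (∀ W ∈ 𝒱, IsOpen W ∧ x ∈ W) ∧
      (⋂ W ∈ 𝒱, closure W) = {x} := fun x => ⟨V x, hVc x, hVo x, hVi x⟩
  have hcard : ∀ B ∈ ℬ, #(closure B) ≤ 2 ^ κ := fun B hBm =>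
    compact_closure_card hκ hψ (hc B hBm)
  -- finite intersections of the pseudobase families
  set fin : X → Set (Set X) := fun y =>
    {T | ∃ s : Set (Set X), s ⊆ V y ∧ s.Finite ∧ s.Nonempty ∧ T = ⋂₀ s} with hfindef
  have hfin_mem : ∀ y : X, ∀ T ∈ fin y, IsOpen T ∧ y ∈ T := by
    rintro y T ⟨s, hs1, hs2, _, rfl⟩
    constructor
    · exact hs2.isOpen_sInter (fun t htm => (hVo y t (hs1 htm)).1)
    · exact mem_sInter.mpr fun t htm => (hVo y t (hs1 htm)).2
  have hfin_card : ∀ y, #(fin y) ≤ κ := by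
    intro y
    have h1 : fin y ⊆ (fun s : Set (Set X) => ⋂₀ s) '' {s | s ⊆ V y ∧ s.Finite} := by
      rintro T ⟨s, hs1, hs2, _, rfl⟩
      exact ⟨s, ⟨hs1, hs2⟩, rfl⟩
    refine (mk_le_mk_of_subset h1).trans (mk_image_le.trans ?_)
    exact (mk_finite_subsets_le _).trans (max_le (hVc y) hκ)
  have hfin_sep : ∀ (y : X) (K : Set X), IsCompact K → y ∉ K →
      ∃ T ∈ fin y, closure T ∩ K = ∅ := by
    intro y K hKc hyK
    have hint : K ∩ ⋂ W : ↥(V y), closure W.1 = ∅ := by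
      rw [eq_empty_iff_forall_notMem]
      rintro z ⟨hz1, hz2⟩
      have hz3 : z ∈ ⋂ W ∈ V y, closure W :=
        mem_iInter₂.mpr fun W hW => mem_iInter.mp hz2 ⟨W, hW⟩
      rw [hVi y, mem_singleton_iff] at hz3
      exact hyK (hz3 ▸ hz1)
    obtain ⟨u, hu⟩ := hKc.elim_finite_subfamily_closed _ (fun W => isClosed_closure) hint
    rcases u.eq_empty_or_nonempty with rfl | hune
    · simp only [Finset.notMem_empty, iInter_of_empty, iInter_univ, inter_univ] at hu
      refine ⟨Set.univ, ⟨{Set.univ}, singleton_subset_iff.mpr (hVuniv y),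
        finite_singleton _, singleton_nonempty _, (sInter_singleton _).symm⟩, ?_⟩
      rw [hu, inter_empty]
    · set s : Set (Set X) := (fun W : ↥(V y) => W.1) '' ↑u with hs
      refine ⟨⋂₀ s, ⟨s, ?_, u.finite_toSet.image _, hune.to_set.image _, rfl⟩, ?_⟩
      · rintro _ ⟨W, _, rfl⟩; exact W.2
      · rw [eq_empty_iff_forall_notMem]
        rintro z ⟨hz1, hz2⟩
        have hz3 : z ∈ K ∩ ⋂ W ∈ u, closure W.1 := ⟨hz2, mem_iInter₂.mpr fun W hW =>
          closure_mono (sInter_subset_of_mem (show W.1 ∈ s from ⟨W, hW, rfl⟩)) hz1⟩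
        rw [hu] at hz3
        exact hz3
  -- witness selection
  have hwit : ∀ 𝒲 : Set (Set X), ∃ bw : Set X, bw ∈ ℬ ∧
      ((∃ B ∈ ℬ, closure B ∩ (⋃ W ∈ 𝒲, closure W) = ∅) →
        closure bw ∩ (⋃ W ∈ 𝒲, closure W) = ∅) := by
    intro 𝒲
    by_cases h : ∃ B ∈ ℬ, closure B ∩ (⋃ W ∈ 𝒲, closure W) = ∅
    · obtain ⟨B, hB1, hB2⟩ := h
      exact ⟨B, hB1, fun _ => hB2⟩
    · exact ⟨B₀, hB₀, fun h' => absurd h' h⟩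
  choose b hbB hbsep using hwit
  set pool : Set X → Set (Set X) := fun R => ⋃ y ∈ R, fin y with hpooldef
  set step : Set (Set X) → Set (Set X) := fun 𝒜 =>
    𝒜 ∪ b '' {𝒲 : Set (Set X) | 𝒲 ⊆ pool (closure (⋃₀ 𝒜)) ∧ #𝒲 ≤ κ} with hstepdef
  have hstep : ∀ 𝒜, 𝒜 ⊆ step 𝒜 := fun 𝒜 => subset_union_left
  set F := ordFix step with hF
  set ν := (Order.succ κ).ord with hν
  have hν_card : ν.card = Order.succ κ := Cardinal.card_ord _
  have hνreg : ν.cof = Order.succ κ := (Cardinal.isRegular_succ hκ).cof_eq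
  have hsucc_le : Order.succ κ ≤ 2 ^ κ := Order.succ_le_of_lt (cantor κ)
  have hνlim : Order.IsSuccLimit ν := Cardinal.isSuccLimit_ord (hκ.trans (Order.le_succ κ))
  have hFsub : ∀ α : Ordinal.{u}, F α ⊆ ℬ := by
    intro α
    induction α using Ordinal.induction with
    | h α IH =>
      rw [hF, ordFix_eq]
      rintro B (hB1 | ⟨𝒲, _, rfl⟩)
      · obtain ⟨β, hβ⟩ := mem_iUnion.mp hB1
        exact IH β.1 β.2 hβ
      · exact hbB 𝒲
  have hFcard : ∀ α : Ordinal.{u}, α < ν → #(F α) ≤ 2 ^ κ := by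
    intro α
    induction α using Ordinal.induction with
    | h α IH =>
      intro hα
      have hA : #(⋃ β : Iio α, F β.1) ≤ 2 ^ κ :=
        mk_iUnion_Iio_le _ ((le_of_lt (Cardinal.lt_ord.mp hα)).trans hsucc_le)
          (fun β hβ => IH β hβ (hβ.trans hα)) h2κ
      have hAB : (⋃ β : Iio α, F β.1) ⊆ ℬ := iUnion_subset fun β => hFsub β.1
      rw [hF, ordFix_eq]
      have hsU : #(⋃₀ (⋃ β : Iio α, F β.1)) ≤ 2 ^ κ := by
        refine (mk_sUnion_le _).trans ?_
        refine le_trans (mul_le_mul' hA (ciSup_le' fun B =>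
          (mk_le_mk_of_subset subset_closure).trans (hcard B.1 (hAB B.2)))) ?_
        rw [mul_eq_self h2κ]
      have hRc : #(closure (⋃₀ (⋃ β : Iio α, F β.1))) ≤ 2 ^ κ := mk_closure_le hκ ht hψ hsU
      have hpoolc : #(pool (closure (⋃₀ (⋃ β : Iio α, F β.1)))) ≤ 2 ^ κ := by
        refine (mk_biUnion_le _ _).trans ?_
        refine le_trans (mul_le_mul' hRc (ciSup_le' fun y =>
          (hfin_card y.1).trans (cantor κ).le)) ?_
        rw [mul_eq_self h2κ]
      have himg : #(b '' {𝒲 : Set (Set X) |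
          𝒲 ⊆ pool (closure (⋃₀ (⋃ β : Iio α, F β.1))) ∧ #𝒲 ≤ κ}) ≤ 2 ^ κ :=
        mk_image_le.trans (mk_small_subsets_le hκ hpoolc)
      refine (mk_union_le _ _).trans ?_
      calc _ ≤ 2 ^ κ + 2 ^ κ := add_le_add hA himg
        _ = 2 ^ κ := add_eq_self h2κ
  have hFmono : ∀ {β α : Ordinal.{u}}, β ≤ α → F β ⊆ F α := fun h => ordFix_mono hstep h
  set 𝒜 := ⋃ β : Iio ν, F β.1 with h𝒜
  have h𝒜B : 𝒜 ⊆ ℬ := iUnion_subset fun β => hFsub β.1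
  have h𝒜card : #𝒜 ≤ 2 ^ κ :=
    mk_iUnion_Iio_le _ (by rw [hν_card]; exact hsucc_le) (fun β hβ => hFcard β hβ) h2κ
  have hsUcard : #(⋃₀ 𝒜) ≤ 2 ^ κ := by
    refine (mk_sUnion_le _).trans ?_
    refine le_trans (mul_le_mul' h𝒜card (ciSup_le' fun B =>
      (mk_le_mk_of_subset subset_closure).trans (hcard B.1 (h𝒜B B.2)))) ?_
    rw [mul_eq_self h2κ]
  set R := closure (⋃₀ 𝒜) with hRdef
  have hRcard : #R ≤ 2 ^ κ := mk_closure_le hκ ht hψ hsUcard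
  have hRstage : ∀ x ∈ R, ∃ α : Ordinal.{u}, α < ν ∧ x ∈ closure (⋃₀ F α) := by
    intro x hx
    obtain ⟨C, hC1, hC2, hC3⟩ := ht (⋃₀ 𝒜) x hx
    have hexo : ∀ c : ↥C, ∃ β : Ordinal.{u}, β < ν ∧ c.1 ∈ ⋃₀ F β := by
      rintro ⟨c, hcC⟩
      obtain ⟨B, hB𝒜, hcB⟩ := hC1 hcC
      obtain ⟨β, hβ⟩ := mem_iUnion.mp hB𝒜
      exact ⟨β.1, β.2, ⟨B, hβ, hcB⟩⟩
    choose e he1 he2 using hexo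
    have hσ : (⨆ c : ↥C, e c) < ν :=
      Ordinal.iSup_lt_ord (by rw [hνreg]; exact hC2.trans_lt (Order.lt_succ κ)) he1
    refine ⟨_, hσ, ?_⟩
    have hCs : C ⊆ ⋃₀ F (⨆ c : ↥C, e c) := by
      intro c hcm
      obtain ⟨B, hBm, hcB⟩ := he2 ⟨c, hcm⟩
      exact ⟨B, hFmono (Ordinal.le_iSup e ⟨c, hcm⟩) hBm, hcB⟩
    exact closure_mono hCs hC3
  have hRuniv : R = Set.univ := by
    by_contra hne
    obtain ⟨p, hp⟩ := (ne_univ_iff_exists_notMem _).mp hne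
    obtain ⟨B₁, hB₁, hB₁R⟩ := pibase_shrink hB hc isClosed_closure.isOpen_compl ⟨p, hp⟩
    have hexT : ∀ y : ↥R, ∃ T ∈ fin y.1, closure T ∩ closure B₁ = ∅ := by
      rintro ⟨y, hy⟩
      refine hfin_sep y (closure B₁) (hc B₁ hB₁) ?_
      intro hyK
      exact (hB₁R hyK) hy
    choose T hTfin hTsep using hexT
    set 𝒰 := Set.range T ∪ {Rᶜ} with h𝒰
    have hcover : IsOpenCover X 𝒰 := by
      constructor
      · rintro U (⟨y, rfl⟩ | rfl)
        · exact (hfin_mem y.1 _ (hTfin y)).1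
        · exact isClosed_closure.isOpen_compl
      · rw [eq_univ_iff_forall]
        intro x
        by_cases hx : x ∈ R
        · exact ⟨T ⟨x, hx⟩, Or.inl (mem_range_self _), (hfin_mem x _ (hTfin ⟨x, hx⟩)).2⟩
        · exact ⟨Rᶜ, Or.inr rfl, hx⟩
    obtain ⟨𝒱c, h𝒱𝒰, h𝒱card, h𝒱dense⟩ := hw 𝒰 hcover
    set 𝒲 := 𝒱c ∩ Set.range T with h𝒲
    have h𝒲card : #𝒲 ≤ κ := (mk_le_mk_of_subset inter_subset_left).trans h𝒱card
    have hexW : ∀ Wm : ↥𝒲, ∃ y : ↥R, T y = Wm.1 := fun Wm => Wm.2.2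
    choose yW hyW using hexW
    choose eα he1 he2 using fun Wm : ↥𝒲 => hRstage (yW Wm).1 (yW Wm).2
    set σ := ⨆ Wm : ↥𝒲, eα Wm with hσdef
    have hσ : σ < ν :=
      Ordinal.iSup_lt_ord (by rw [hνreg]; exact h𝒲card.trans_lt (Order.lt_succ κ)) he1
    have hσ1 : Order.succ σ < ν := hνlim.succ_lt hσ
    have h𝒲pool : 𝒲 ⊆ pool (closure (⋃₀ (⋃ β : Iio (Order.succ σ), F β.1))) ∧ #𝒲 ≤ κ := by
      refine ⟨?_, h𝒲card⟩
      intro Wm hWm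
      have h1 : (yW ⟨Wm, hWm⟩).1 ∈ closure (⋃₀ (⋃ β : Iio (Order.succ σ), F β.1)) := by
        refine closure_mono (sUnion_subset_sUnion ?_) (he2 ⟨Wm, hWm⟩)
        exact (hFmono (Ordinal.le_iSup eα ⟨Wm, hWm⟩)).trans
          (subset_iUnion (fun β : Iio (Order.succ σ) => F β.1) ⟨σ, Order.lt_succ σ⟩)
      refine mem_biUnion h1 ?_
      have hTf := hTfin (yW ⟨Wm, hWm⟩)
      rw [hyW ⟨Wm, hWm⟩] at hTf
      exact hTf
    have hbF : b 𝒲 ∈ F (Order.succ σ) := by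
      rw [hF, ordFix_eq]
      exact mem_union_right _ ⟨𝒲, h𝒲pool, rfl⟩
    have hb𝒜 : b 𝒲 ∈ 𝒜 := mem_iUnion.mpr ⟨⟨_, hσ1⟩, hbF⟩
    have hbR : b 𝒲 ⊆ R := (subset_sUnion_of_mem hb𝒜).trans subset_closure
    have hbsep' : closure (b 𝒲) ∩ (⋃ W ∈ 𝒲, closure W) = ∅ := by
      refine hbsep 𝒲 ⟨B₁, hB₁, ?_⟩
      rw [eq_empty_iff_forall_notMem]
      rintro z ⟨hz1, hz2⟩
      obtain ⟨Wm, hWm, hzW⟩ := mem_iUnion₂.mp hz2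
      have hts := hTsep (yW ⟨Wm, hWm⟩)
      rw [hyW ⟨Wm, hWm⟩] at hts
      exact (eq_empty_iff_forall_notMem.mp hts) z ⟨hzW, hz1⟩
    obtain ⟨hbo, hbne⟩ := hB.1 (b 𝒲) (hbB 𝒲)
    obtain ⟨x, hxb, hx𝒱⟩ := h𝒱dense.inter_open_nonempty (b 𝒲) hbo hbne
    obtain ⟨V₀, hV₀𝒱, hxV₀⟩ := hx𝒱
    rcases h𝒱𝒰 hV₀𝒱 with hV₀T | hV₀R
    · have hV₀𝒲 : V₀ ∈ 𝒲 := ⟨hV₀𝒱, hV₀T⟩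
      refine (eq_empty_iff_forall_notMem.mp hbsep') x ⟨subset_closure hxb, ?_⟩
      exact mem_iUnion₂.mpr ⟨V₀, hV₀𝒲, subset_closure hxV₀⟩
    · rw [mem_singleton_iff] at hV₀R
      rw [hV₀R] at hxV₀
      exact hxV₀ (hbR hxb)
  calc #X = #R := by rw [hRuniv, mk_univ]
    _ ≤ 2 ^ κ := hRcard

lemma psi_set_nonempty (X : Type u) [TopologicalSpace X] [T2Space X] :
    {κ : Cardinal.{u} | ℵ₀ ≤ κ ∧ ∀ x : X, ∃ 𝒱 : Set (Set X), #𝒱 ≤ κ ∧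
      (∀ V ∈ 𝒱, IsOpen V ∧ x ∈ V) ∧ (⋂ V ∈ 𝒱, closure V) = {x}}.Nonempty := by
  refine ⟨max ℵ₀ (2 ^ #X), le_max_left _ _, fun x =>
    ⟨{V : Set X | IsOpen V ∧ x ∈ V}, ?_, fun V hV => hV, ?_⟩⟩
  · refine le_trans (mk_subtype_le _) (le_trans ?_ (le_max_right _ _))
    rw [mk_set]
  · apply subset_antisymm
    · intro z hz
      rw [mem_singleton_iff]
      by_contra hzx
      obtain ⟨U, Wo, hU, hW, hxU, hzW, hUW⟩ := t2_separation (Ne.symm hzx)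
      have hzc : z ∈ closure U := mem_iInter₂.mp hz U ⟨hU, hxU⟩
      have hsub : closure U ⊆ Woᶜ :=
        closure_minimal (fun w hw => Set.disjoint_left.mp hUW hw) hW.isClosed_compl
      exact hsub hzc hzW
    · rw [singleton_subset_iff]
      exact mem_iInter₂.mpr fun V hV => subset_closure hV.2

lemma t_set_nonempty (X : Type u) [TopologicalSpace X] :
    {κ : Cardinal.{u} | ℵ₀ ≤ κ ∧ ∀ (A : Set X) (x : X), x ∈ closure A →
      ∃ B ⊆ A, #B ≤ κ ∧ x ∈ closure B}.Nonempty :=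
  ⟨max ℵ₀ #X, le_max_left _ _, fun A x hx =>
    ⟨A, subset_rfl, (mk_set_le A).trans (le_max_right _ _), hx⟩⟩

lemma w_set_nonempty (X : Type u) [TopologicalSpace X] :
    {κ : Cardinal.{u} | ℵ₀ ≤ κ ∧ ∀ 𝒰 : Set (Set X), IsOpenCover X 𝒰 →
      ∃ 𝒱 ⊆ 𝒰, #𝒱 ≤ κ ∧ Dense (⋃₀ 𝒱)}.Nonempty := by
  refine ⟨max ℵ₀ (2 ^ #X), le_max_left _ _, fun 𝒰 h𝒰 => ⟨𝒰, subset_rfl, ?_, ?_⟩⟩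
  · refine le_trans (mk_set_le 𝒰) (le_trans ?_ (le_max_right _ _))
    rw [mk_set]
  · rw [h𝒰.2]
    exact dense_univ

end Stmt17Aux

theorem stmt17 (X : Type u) [TopologicalSpace X] [T2Space X] (ℬ : Set (Set X))
    (hB : IsPiBase X ℬ) (hc : ∀ B ∈ ℬ, IsCompact (closure B)) :
    #X ≤ 2 ^ (closedPseudoChar X * tightness X * wLdeg X) := by
  classical
  obtain ⟨hψ0, hψ1⟩ := csInf_mem (Stmt17Aux.psi_set_nonempty X)
  obtain ⟨ht0, ht1⟩ := csInf_mem (Stmt17Aux.t_set_nonempty X)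
  obtain ⟨hw0, hw1⟩ := csInf_mem (Stmt17Aux.w_set_nonempty X)
  have hψκ : closedPseudoChar X ≤ closedPseudoChar X * tightness X * wLdeg X := by
    calc closedPseudoChar X = closedPseudoChar X * 1 * 1 := by rw [mul_one, mul_one]
      _ ≤ _ := mul_le_mul' (mul_le_mul' le_rfl (le_trans one_le_aleph0 ht0))
          (le_trans one_le_aleph0 hw0)
  have htκ : tightness X ≤ closedPseudoChar X * tightness X * wLdeg X := by
    calc tightness X = 1 * tightness X * 1 := by rw [one_mul, mul_one]
      _ ≤ _ := mul_le_mul' (mul_le_mul' (le_trans one_le_aleph0 hψ0) le_rfl)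
          (le_trans one_le_aleph0 hw0)
  have hwκ : wLdeg X ≤ closedPseudoChar X * tightness X * wLdeg X := by
    calc wLdeg X = 1 * 1 * wLdeg X := by rw [one_mul, one_mul]
      _ ≤ _ := mul_le_mul' (mul_le_mul' (le_trans one_le_aleph0 hψ0)
          (le_trans one_le_aleph0 ht0)) le_rfl
  have hκinf : ℵ₀ ≤ closedPseudoChar X * tightness X * wLdeg X := hψ0.trans hψκ
  refine Stmt17Aux.main_aux hκinf ?_ ?_ ?_ hB hc
  · intro A x hx
    obtain ⟨Bs, h1, h2, h3⟩ := ht1 A x hx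
    exact ⟨Bs, h1, h2.trans htκ, h3⟩
  · intro x
    obtain ⟨𝒱, ha, hb', hc'⟩ := hψ1 x
    exact ⟨𝒱, ha.trans hψκ, hb', hc'⟩
  · intro 𝒰 hU
    obtain ⟨𝒱, ha, hb', hc'⟩ := hw1 𝒰 hU
    exact ⟨𝒱, ha, hb'.trans hwκ, hc'⟩
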